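/- Let R = F_{q^a}[X;σ] with σ the q-Frobenius (so σ has order a on F_{q^a}), and let s ∈ R be nonzero. Then s is a total divisor of itself if and only if s = γ·c·X^k for some γ ∈ F_{q^a}, some k ≥ 0, and some monic polynomial c in the center Z(R) = F_q[X^a]. -/

import Mathlib

noncomputable section

variable {K : Type*} [Field K]

/-- The twisted shift operator `X` (sends `∑ aᵢ Yⁱ` to `∑ σ(aᵢ) Yⁱ⁺¹` on coefficient
sequences), realizing the indeterminate of the skew polynomial ring `K[X;σ]`. -/
def skewX (σ : K →+* K) : AddMonoid.End (ℕ → K) where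
  toFun v n := if n = 0 then 0 else σ (v (n - 1))
  map_zero' := by funext n; simp
  map_add' v w := by
    funext n
    by_cases h : n = 0 <;> simp [h, Pi.add_apply]

/-- Left multiplication by the constant `a`, realizing the embedding of `K`
into the skew polynomial ring `K[X;σ]`. -/
def skewC (a : K) : AddMonoid.End (ℕ → K) where
  toFun v n := a * v n
  map_zero' := by funext n; simp
  map_add' v w := by funext n; simp [Pi.add_apply, mul_add]

/-- The skew polynomial ring `K[X;σ]`, realized concretely as the subring of additive
endomorphisms of `ℕ → K` generated by the constants and the twisted shift. -/
def SkewPolyRing (σ : K →+* K) : Subring (AddMonoid.End (ℕ → K)) :=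
  Subring.closure (Set.range skewC ∪ {skewX σ})

/-- The indeterminate `X` as an element of `K[X;σ]`. -/
def Xel (σ : K →+* K) : SkewPolyRing σ :=
  ⟨skewX σ, Subring.subset_closure (Set.mem_union_right _ rfl)⟩

/-- The constant `a` as an element of `K[X;σ]`. -/
def Cel (σ : K →+* K) (a : K) : SkewPolyRing σ :=
  ⟨skewC a, Subring.subset_closure (Set.mem_union_left _ ⟨a, rfl⟩)⟩

/-- The `i`-th coefficient of a skew polynomial (read off by acting on the
delta sequence at `0`). -/
def coeffS (σ : K →+* K) (p : SkewPolyRing σ) (i : ℕ) : K :=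
  (p : AddMonoid.End (ℕ → K)) (fun n => if n = 0 then 1 else 0) i

/-- The degree of a skew polynomial. -/
def natDegS (σ : K →+* K) (p : SkewPolyRing σ) : ℕ :=
  sSup {i | coeffS σ p i ≠ 0}

/-- A skew polynomial is monic if its leading coefficient is `1`. -/
def MonicS (σ : K →+* K) (p : SkewPolyRing σ) : Prop :=
  coeffS σ p (natDegS σ p) = 1

/-- `s` left-divides `t`. -/
def LDvd (σ : K →+* K) (s t : SkewPolyRing σ) : Prop := ∃ u, t = s * u

/-- `s` right-divides `t`. -/
def RDvd (σ : K →+* K) (s t : SkewPolyRing σ) : Prop := ∃ u, t = u * s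

/-- `s` is a total divisor of `t`: `s` left-divides `u*t` and right-divides `t*u`
for every `u`. -/
def TotalDvd (σ : K →+* K) (s t : SkewPolyRing σ) : Prop :=
  ∀ u, LDvd σ s (u * t) ∧ RDvd σ s (t * u)

/-- `d` is the monic greatest common right divisor of `f` and `g`. -/
def IsGcrd (σ : K →+* K) (d f g : SkewPolyRing σ) : Prop :=
  MonicS σ d ∧ RDvd σ d f ∧ RDvd σ d g ∧ ∀ e, RDvd σ e f → RDvd σ e g → RDvd σ e d

/-- The two-sided ideal `RtR` generated by `t`, as an additive subgroup. -/
def TwoSidedGen (σ : K →+* K) (t : SkewPolyRing σ) : AddSubgroup (SkewPolyRing σ) :=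
  AddSubgroup.closure {x | ∃ r r', x = r * t * r'}


/-- Representation predicate: `f` acts like the skew polynomial with coefficients `c`. -/
def SRep (σ : K →+* K) (f : AddMonoid.End (ℕ → K)) (c : ℕ → K) : Prop :=
  (∃ N, ∀ i, N ≤ i → c i = 0) ∧
    ∀ v n, f v n = ∑ i ∈ Finset.range (n + 1), c i * σ^[i] (v (n - i))

@[simp] theorem skewC_apply (a : K) (v : ℕ → K) (n : ℕ) : skewC a v n = a * v n := rfl

@[simp] theorem skewX_apply (σ : K →+* K) (v : ℕ → K) (n : ℕ) :
    skewX σ v n = if n = 0 then 0 else σ (v (n - 1)) := rfl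

/-- Triangle sum reindexing. -/
theorem triangle_sum {M : Type*} [AddCommMonoid M] (n : ℕ) (F : ℕ → ℕ → M) :
    ∑ i ∈ Finset.range (n + 1), ∑ l ∈ Finset.range (n + 1 - i), F i l =
      ∑ j ∈ Finset.range (n + 1), ∑ i ∈ Finset.range (j + 1), F i (j - i) := by
  rw [Finset.sum_sigma', Finset.sum_sigma']
  apply Finset.sum_nbij' (fun p => ⟨p.1 + p.2, p.1⟩) (fun p => ⟨p.2, p.1 - p.2⟩)
  · rintro ⟨i, l⟩ h
    simp only [Finset.mem_sigma, Finset.mem_range] at h ⊢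
    omega
  · rintro ⟨j, i⟩ h
    simp only [Finset.mem_sigma, Finset.mem_range] at h ⊢
    omega
  · rintro ⟨i, l⟩ h; simp
  · rintro ⟨j, i⟩ h
    simp only [Finset.mem_sigma, Finset.mem_range] at h
    simp only [Sigma.mk.inj_iff]
    constructor
    · omega
    · exact heq_of_eq rfl
  · rintro ⟨i, l⟩ h; simp

theorem rep_exists' (σ : K →+* K) (f : AddMonoid.End (ℕ → K))
    (hp : f ∈ Subring.closure (Set.range skewC ∪ {skewX σ})) : ∃ c, SRep σ f c := by
  induction hp using Subring.closure_induction with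
  | mem f hf =>
    rcases hf with ⟨a, rfl⟩ | rfl
    · refine ⟨fun i => if i = 0 then a else 0, ⟨1, fun i hi => if_neg (by omega)⟩, fun v n => ?_⟩
      rw [Finset.sum_eq_single 0]
      · simp
      · intro b _ hb; simp [hb]
      · simp
    · refine ⟨fun i => if i = 1 then 1 else 0, ⟨2, fun i hi => if_neg (by omega)⟩, fun v n => ?_⟩
      rcases Nat.eq_zero_or_pos n with rfl | hn
      · simp
      · rw [Finset.sum_eq_single 1]
        · simp [Nat.pos_iff_ne_zero.mp hn]
        · intro b _ hb; simp [hb]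
        · intro h; exact absurd (Finset.mem_range.2 (by omega)) h
  | zero =>
    exact ⟨0, ⟨0, fun i _ => rfl⟩, fun v n => by simp⟩
  | one =>
    refine ⟨fun i => if i = 0 then 1 else 0, ⟨1, fun i hi => if_neg (by omega)⟩, fun v n => ?_⟩
    rw [Finset.sum_eq_single 0]
    · simp
    · intro b _ hb; simp [hb]
    · simp
  | add f g _ _ hf hg =>
    obtain ⟨c, ⟨N, hN⟩, hc⟩ := hf
    obtain ⟨c', ⟨N', hN'⟩, hc'⟩ := hg
    refine ⟨c + c', ⟨max N N', fun i hi => by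
      simp [Pi.add_apply, hN i (le_of_max_le_left hi), hN' i (le_of_max_le_right hi)]⟩,
      fun v n => ?_⟩
    show f v n + g v n = _
    rw [hc, hc', ← Finset.sum_add_distrib]
    exact Finset.sum_congr rfl fun i _ => by simp [Pi.add_apply, add_mul]
  | neg f _ hf =>
    obtain ⟨c, ⟨N, hN⟩, hc⟩ := hf
    refine ⟨-c, ⟨N, fun i hi => by simp [hN i hi]⟩, fun v n => ?_⟩
    show -(f v n) = _
    rw [hc, ← Finset.sum_neg_distrib]
    exact Finset.sum_congr rfl fun i _ => by simp
  | mul f g _ _ hf hg =>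
    obtain ⟨c, ⟨N, hN⟩, hc⟩ := hf
    obtain ⟨c', ⟨N', hN'⟩, hc'⟩ := hg
    refine ⟨fun j => ∑ i ∈ Finset.range (j + 1), c i * σ^[i] (c' (j - i)),
      ⟨N + N', fun j hj => Finset.sum_eq_zero fun i hi => ?_⟩, fun v n => ?_⟩
    · simp only [Finset.mem_range] at hi
      by_cases h : N ≤ i
      · simp [hN i h]
      · rw [hN' (j - i) (by omega), iterate_map_zero, mul_zero]
    · show f (g v) n = _
      rw [hc]
      have key : ∀ i ∈ Finset.range (n + 1), c i * σ^[i] (g v (n - i)) =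
          ∑ l ∈ Finset.range (n + 1 - i), c i * σ^[i] (c' l) * σ^[i + l] (v (n - i - l)) := by
        intro i hi
        simp only [Finset.mem_range] at hi
        rw [hc', ← RingHom.coe_pow, map_sum, Finset.mul_sum]
        apply Finset.sum_congr (by congr 1; omega)
        intro l hl
        simp only [Finset.mem_range] at hl
        rw [map_mul, mul_assoc, RingHom.coe_pow, ← Function.iterate_add_apply]
      rw [Finset.sum_congr rfl key, triangle_sum]
      apply Finset.sum_congr rfl
      intro j hj
      simp only [Finset.mem_range] at hj
      rw [Finset.sum_mul]
      apply Finset.sum_congr rfl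
      intro i hi
      simp only [Finset.mem_range] at hi
      have h1 : i + (j - i) = j := by omega
      have h2 : n - i - (j - i) = n - j := by omega
      rw [h1, h2, mul_assoc]

theorem rep_exists (σ : K →+* K) (p : SkewPolyRing σ) :
    ∃ c, SRep σ (p : AddMonoid.End (ℕ → K)) c :=
  rep_exists' σ _ p.2

namespace SkewAux

variable (σ : K →+* K)

theorem srep_coeff {p : SkewPolyRing σ} {c : ℕ → K}
    (h : SRep σ (p : AddMonoid.End (ℕ → K)) c) (i : ℕ) : coeffS σ p i = c i := by
  have := h.2 (fun n => if n = 0 then 1 else 0) i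
  rw [coeffS, this, Finset.sum_eq_single i]
  · simp
  · intro b hb hbne
    simp only [Finset.mem_range] at hb
    rw [if_neg (by omega), iterate_map_zero, mul_zero]
  · simp

theorem coeffS_bound (p : SkewPolyRing σ) : ∃ N, ∀ i, N ≤ i → coeffS σ p i = 0 := by
  obtain ⟨c, hrep⟩ := rep_exists σ p
  obtain ⟨N, hN⟩ := hrep.1
  exact ⟨N, fun i hi => by rw [srep_coeff σ hrep i, hN i hi]⟩

theorem apply_eq (p : SkewPolyRing σ) (v : ℕ → K) (n : ℕ) :
    (p : AddMonoid.End (ℕ → K)) v n =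
      ∑ i ∈ Finset.range (n + 1), coeffS σ p i * σ^[i] (v (n - i)) := by
  obtain ⟨c, hrep⟩ := rep_exists σ p
  rw [hrep.2 v n]
  exact Finset.sum_congr rfl fun i _ => by rw [srep_coeff σ hrep i]

theorem ext_coeff {p r : SkewPolyRing σ} (h : ∀ i, coeffS σ p i = coeffS σ r i) : p = r := by
  apply Subtype.ext
  apply AddMonoidHom.ext
  intro v
  funext n
  show (p : AddMonoid.End (ℕ → K)) v n = (r : AddMonoid.End (ℕ → K)) v n
  rw [apply_eq, apply_eq]
  exact Finset.sum_congr rfl fun i _ => by rw [h i]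

theorem coeffS_add (p r : SkewPolyRing σ) (i : ℕ) :
    coeffS σ (p + r) i = coeffS σ p i + coeffS σ r i := rfl

theorem coeffS_zero (i : ℕ) : coeffS σ (0 : SkewPolyRing σ) i = 0 := rfl

theorem coeffS_one (i : ℕ) : coeffS σ (1 : SkewPolyRing σ) i = if i = 0 then 1 else 0 := rfl

theorem coeffS_Cel (b : K) (i : ℕ) :
    coeffS σ (Cel σ b) i = if i = 0 then b else 0 := by
  show b * (if i = 0 then 1 else 0) = _
  by_cases h : i = 0 <;> simp [h]

theorem coeffS_mul (p r : SkewPolyRing σ) (j : ℕ) :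
    coeffS σ (p * r) j =
      ∑ i ∈ Finset.range (j + 1), coeffS σ p i * σ^[i] (coeffS σ r (j - i)) := by
  show (p : AddMonoid.End (ℕ → K)) ((r : AddMonoid.End (ℕ → K)) (fun n => if n = 0 then 1 else 0)) j = _
  rw [apply_eq σ p]
  rfl

theorem coeffS_Cel_mul (b : K) (p : SkewPolyRing σ) (j : ℕ) :
    coeffS σ (Cel σ b * p) j = b * coeffS σ p j := rfl

theorem coeffS_Xel_mul (p : SkewPolyRing σ) (j : ℕ) :
    coeffS σ (Xel σ * p) j = if j = 0 then 0 else σ (coeffS σ p (j - 1)) := rfl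

theorem coeffS_mul_Xel (p : SkewPolyRing σ) (j : ℕ) :
    coeffS σ (p * Xel σ) j = if j = 0 then 0 else coeffS σ p (j - 1) := by
  rw [coeffS_mul]
  rcases Nat.eq_zero_or_pos j with rfl | hj
  · simp [show coeffS σ (Xel σ) 0 = 0 from rfl]
  · rw [if_neg (by omega), Finset.sum_eq_single (j - 1)]
    · have : j - (j - 1) = 1 := by omega
      rw [this, show coeffS σ (Xel σ) 1 = 1 from by simp [coeffS, Xel], iterate_map_one, mul_one]
    · intro b hb hbne
      have : coeffS σ (Xel σ) (j - b) = if j - b = 0 then 0 else σ (if j - b - 1 = 0 then 1 else 0) := rfl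
      simp only [Finset.mem_range] at hb
      rw [this]
      by_cases hb0 : j - b = 0
      · rw [if_pos hb0, iterate_map_zero, mul_zero]
      · rw [if_neg hb0, if_neg (by omega), map_zero, iterate_map_zero, mul_zero]
    · intro h
      exact absurd (Finset.mem_range.2 (by omega)) h

theorem coeffS_mul_Xel_pow (p : SkewPolyRing σ) (k j : ℕ) :
    coeffS σ (p * Xel σ ^ k) j = if j < k then 0 else coeffS σ p (j - k) := by
  induction k generalizing j with
  | zero => simp
  | succ k ih =>
    rw [pow_succ, ← mul_assoc, coeffS_mul_Xel]
    rcases Nat.eq_zero_or_pos j with rfl | hj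
    · simp
    · rw [if_neg (by omega), ih]
      by_cases h : j < k + 1
      · rw [if_pos (by omega), if_pos h]
      · rw [if_neg (by omega), if_neg h]
        congr 1
        omega

theorem Cel_mul (b b' : K) : Cel σ b * Cel σ b' = Cel σ (b * b') := by
  apply ext_coeff σ
  intro i
  rw [coeffS_Cel_mul, coeffS_Cel, coeffS_Cel]
  by_cases h : i = 0 <;> simp [h]

theorem Cel_one : Cel σ 1 = 1 := by
  apply ext_coeff σ
  intro i
  rw [coeffS_Cel, coeffS_one]

theorem Cel_ne_zero {b : K} (hb : b ≠ 0) : Cel σ b ≠ 0 := by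
  intro h
  have := congrArg (fun p => coeffS σ p 0) h
  simp only [coeffS_Cel, if_pos rfl, coeffS_zero] at this
  exact hb this

/-- Build a skew polynomial from coefficients. -/
def ofC (c : ℕ → K) (N : ℕ) : SkewPolyRing σ :=
  ∑ i ∈ Finset.range N, Cel σ (c i) * Xel σ ^ i

theorem coeffS_sum {ι : Type*} (t : Finset ι) (f : ι → SkewPolyRing σ) (j : ℕ) :
    coeffS σ (∑ i ∈ t, f i) j = ∑ i ∈ t, coeffS σ (f i) j := by
  classical
  induction t using Finset.induction with
  | empty => simp [coeffS_zero]
  | insert _ _ h ih => rw [Finset.sum_insert h, Finset.sum_insert h, coeffS_add, ih]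

theorem coeffS_Cel_mul_Xel_pow (b : K) (i j : ℕ) :
    coeffS σ (Cel σ b * Xel σ ^ i) j = if j = i then b else 0 := by
  rw [show Cel σ b * Xel σ ^ i = Cel σ b * 1 * Xel σ ^ i by rw [mul_one],
    coeffS_mul_Xel_pow]
  by_cases h : j < i
  · rw [if_pos h, if_neg (by omega)]
  · rw [if_neg h, coeffS_Cel_mul, coeffS_one]
    by_cases h2 : j = i
    · rw [if_pos (by omega), if_pos h2, mul_one]
    · rw [if_neg (by omega), if_neg h2, mul_zero]

theorem coeffS_ofC (c : ℕ → K) (N : ℕ) (j : ℕ) :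
    coeffS σ (ofC σ c N) j = if j < N then c j else 0 := by
  rw [ofC, coeffS_sum]
  by_cases h : j < N
  · rw [if_pos h, Finset.sum_eq_single j]
    · rw [coeffS_Cel_mul_Xel_pow, if_pos rfl]
    · intro b _ hb
      rw [coeffS_Cel_mul_Xel_pow, if_neg (fun hh => hb hh.symm)]
    · intro hj
      exact absurd (Finset.mem_range.2 h) hj
  · rw [if_neg h]
    apply Finset.sum_eq_zero
    intro i hi
    simp only [Finset.mem_range] at hi
    rw [coeffS_Cel_mul_Xel_pow, if_neg (by omega)]

/-! ### Degree theory -/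

theorem exists_coeff_ne_zero {p : SkewPolyRing σ} (hp : p ≠ 0) :
    ∃ i, coeffS σ p i ≠ 0 := by
  by_contra h
  push_neg at h
  exact hp (ext_coeff σ fun i => by rw [h i, coeffS_zero])

theorem bddAbove_coeff (p : SkewPolyRing σ) : BddAbove {i | coeffS σ p i ≠ 0} := by
  obtain ⟨N, hN⟩ := coeffS_bound σ p
  exact ⟨N, fun i hi => by by_contra hc; exact hi (hN i (by omega))⟩

theorem coeffS_natDegS_ne_zero {p : SkewPolyRing σ} (hp : p ≠ 0) :
    coeffS σ p (natDegS σ p) ≠ 0 := by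
  obtain ⟨i, hi⟩ := exists_coeff_ne_zero σ hp
  exact Nat.sSup_mem ⟨i, hi⟩ (bddAbove_coeff σ p)

theorem le_natDegS {p : SkewPolyRing σ} {i : ℕ} (hi : coeffS σ p i ≠ 0) :
    i ≤ natDegS σ p :=
  le_csSup (bddAbove_coeff σ p) hi

theorem coeffS_eq_zero_of_natDegS_lt {p : SkewPolyRing σ} {i : ℕ}
    (hi : natDegS σ p < i) : coeffS σ p i = 0 := by
  by_contra h
  exact absurd (le_natDegS σ h) (by omega)

theorem natDegS_eq_of {p : SkewPolyRing σ} {d : ℕ} (h1 : coeffS σ p d ≠ 0)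
    (h2 : ∀ j, d < j → coeffS σ p j = 0) : natDegS σ p = d := by
  apply le_antisymm
  · apply csSup_le ⟨d, h1⟩
    intro i hi
    by_contra hc
    exact hi (h2 i (by omega))
  · exact le_natDegS σ h1

theorem coeffS_mul_deg_add (p r : SkewPolyRing σ) :
    coeffS σ (p * r) (natDegS σ p + natDegS σ r) =
      coeffS σ p (natDegS σ p) * σ^[natDegS σ p] (coeffS σ r (natDegS σ r)) := by
  rw [coeffS_mul, Finset.sum_eq_single (natDegS σ p)]
  · have h : natDegS σ p + natDegS σ r - natDegS σ p = natDegS σ r := by omega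
    rw [h]
  · intro b hb hbne
    simp only [Finset.mem_range] at hb
    by_cases h : b ≤ natDegS σ p
    · rw [coeffS_eq_zero_of_natDegS_lt σ (show natDegS σ r < _ by omega), iterate_map_zero,
        mul_zero]
    · rw [coeffS_eq_zero_of_natDegS_lt σ (show natDegS σ p < b by omega), zero_mul]
  · intro h
    exact absurd (Finset.mem_range.2 (by omega)) h

theorem coeffS_mul_eq_zero_of_lt (p r : SkewPolyRing σ) {j : ℕ}
    (hj : natDegS σ p + natDegS σ r < j) : coeffS σ (p * r) j = 0 := by
  rw [coeffS_mul]
  apply Finset.sum_eq_zero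
  intro i hi
  simp only [Finset.mem_range] at hi
  by_cases h : i ≤ natDegS σ p
  · rw [coeffS_eq_zero_of_natDegS_lt σ (show natDegS σ r < j - i by omega), iterate_map_zero,
      mul_zero]
  · rw [coeffS_eq_zero_of_natDegS_lt σ (show natDegS σ p < i by omega), zero_mul]

theorem natDegS_mul {p r : SkewPolyRing σ} (hp : p ≠ 0) (hr : r ≠ 0) :
    natDegS σ (p * r) = natDegS σ p + natDegS σ r := by
  apply natDegS_eq_of σ
  · rw [coeffS_mul_deg_add]
    apply mul_ne_zero (coeffS_natDegS_ne_zero σ hp)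
    intro h
    exact coeffS_natDegS_ne_zero σ hr (Function.Injective.iterate σ.injective _
      (by rw [h, iterate_map_zero]))
  · intro j hj
    exact coeffS_mul_eq_zero_of_lt σ p r hj

/-! ### Commutation with X -/

theorem Xel_mul_comm (u : SkewPolyRing σ) : ∃ w, Xel σ * u = w * Xel σ := by
  obtain ⟨N, hN⟩ := coeffS_bound σ u
  refine ⟨ofC σ (fun i => σ (coeffS σ u i)) N, ext_coeff σ fun j => ?_⟩
  rw [coeffS_Xel_mul, coeffS_mul_Xel]
  rcases Nat.eq_zero_or_pos j with rfl | hj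
  · simp
  · rw [if_neg (by omega), if_neg (by omega), coeffS_ofC]
    by_cases h : j - 1 < N
    · rw [if_pos h]
    · rw [if_neg h, hN (j - 1) (by omega), map_zero]

theorem mul_Xel_comm (hsurj : Function.Surjective σ) (u : SkewPolyRing σ) :
    ∃ w, u * Xel σ = Xel σ * w := by
  obtain ⟨N, hN⟩ := coeffS_bound σ u
  refine ⟨ofC σ (fun i => Function.invFun σ (coeffS σ u i)) N, ext_coeff σ fun j => ?_⟩
  rw [coeffS_Xel_mul, coeffS_mul_Xel]
  rcases Nat.eq_zero_or_pos j with rfl | hj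
  · simp
  · rw [if_neg (by omega), if_neg (by omega), coeffS_ofC]
    by_cases h : j - 1 < N
    · rw [if_pos h, Function.rightInverse_invFun hsurj]
    · rw [if_neg h, hN (j - 1) (by omega), map_zero]

theorem Xel_pow_mul_comm (k : ℕ) (u : SkewPolyRing σ) :
    ∃ w, Xel σ ^ k * u = w * Xel σ ^ k := by
  induction k generalizing u with
  | zero => exact ⟨u, by simp⟩
  | succ k ih =>
    obtain ⟨w1, hw1⟩ := ih u
    obtain ⟨w2, hw2⟩ := Xel_mul_comm σ w1
    refine ⟨w2, ?_⟩
    calc Xel σ ^ (k + 1) * u = Xel σ * (Xel σ ^ k * u) := by rw [← mul_assoc, ← pow_succ']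
    _ = (Xel σ * w1) * Xel σ ^ k := by rw [hw1, mul_assoc]
    _ = w2 * Xel σ ^ (k + 1) := by rw [hw2, mul_assoc, ← pow_succ']

theorem mul_Xel_pow_comm (hsurj : Function.Surjective σ) (k : ℕ) (u : SkewPolyRing σ) :
    ∃ w, u * Xel σ ^ k = Xel σ ^ k * w := by
  induction k generalizing u with
  | zero => exact ⟨u, by simp⟩
  | succ k ih =>
    obtain ⟨w1, hw1⟩ := mul_Xel_comm σ hsurj u
    obtain ⟨w2, hw2⟩ := ih w1
    refine ⟨w2, ?_⟩
    calc u * Xel σ ^ (k + 1) = (u * Xel σ) * Xel σ ^ k := by rw [mul_assoc, ← pow_succ']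
    _ = Xel σ * (w1 * Xel σ ^ k) := by rw [hw1, mul_assoc]
    _ = Xel σ ^ (k + 1) * w2 := by rw [hw2, ← mul_assoc, ← pow_succ']

/-! ### Centrality -/

theorem mem_center_of_coeff (c : SkewPolyRing σ)
    (h1 : ∀ j, σ (coeffS σ c j) = coeffS σ c j)
    (h2 : ∀ j, coeffS σ c j ≠ 0 → ∀ x : K, σ^[j] x = x) :
    c ∈ Set.center (SkewPolyRing σ) := by
  rw [Semigroup.mem_center_iff]
  intro g
  apply ext_coeff σ
  intro m
  rw [coeffS_mul, coeffS_mul]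
  conv_rhs => rw [← Finset.sum_range_reflect]
  apply Finset.sum_congr rfl
  intro i hi
  simp only [Finset.mem_range] at hi
  have e1 : m + 1 - 1 - i = m - i := by omega
  have e2 : m - (m - i) = i := by omega
  rw [e1, e2]
  by_cases hc : coeffS σ c (m - i) = 0
  · rw [hc, iterate_map_zero, mul_zero, zero_mul]
  · rw [Function.iterate_fixed (h1 (m - i)) i, h2 (m - i) hc (coeffS σ g i), mul_comm]

/-! ### Frobenius facts -/

theorem iter_eq_pow {q : ℕ} (hσ : ∀ x : K, σ x = x ^ q) (j : ℕ) (x : K) :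
    σ^[j] x = x ^ q ^ j := by
  induction j generalizing x with
  | zero => simp
  | succ j ih =>
    rw [Function.iterate_succ_apply, ih (σ x), hσ x, ← pow_mul, ← pow_succ']

theorem iter_card [Fintype K] {q a : ℕ} (hK : Fintype.card K = q ^ a)
    (hσ : ∀ x : K, σ x = x ^ q) (x : K) : σ^[a] x = x := by
  rw [iter_eq_pow σ hσ, ← hK, FiniteField.pow_card]

theorem iter_fix_of_dvd [Fintype K] {q a : ℕ} (hK : Fintype.card K = q ^ a)
    (hσ : ∀ x : K, σ x = x ^ q) {j : ℕ} (hj : a ∣ j) (x : K) : σ^[j] x = x := by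
  obtain ⟨m, rfl⟩ := hj
  induction m with
  | zero => simp
  | succ m ih =>
    have h : a * (m + 1) = a * m + a := by ring
    rw [h, Function.iterate_add_apply, iter_card σ hK hσ, ih]

theorem prim_elt [Fintype K] {q a : ℕ} (hq : 2 ≤ q) (ha : 0 < a)
    (hK : Fintype.card K = q ^ a) (hσ : ∀ x : K, σ x = x ^ q) :
    ∃ α : K, ∀ j, σ^[j] α = α → a ∣ j := by
  obtain ⟨g, hg⟩ := IsCyclic.exists_generator (α := Kˣ)
  refine ⟨(g : K), fun j hj => ?_⟩
  have horder : orderOf g = q ^ a - 1 := by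
    rw [orderOf_eq_card_of_forall_mem_zpowers hg, Nat.card_units, Nat.card_eq_fintype_card, hK]
  -- reduce to remainder
  have hdecomp : j = a * (j / a) + j % a := (Nat.div_add_mod j a).symm
  have hr : σ^[j % a] (g : K) = (g : K) := by
    rw [hdecomp, Function.iterate_add_apply, iter_fix_of_dvd σ hK hσ ⟨j / a, rfl⟩] at hj
    exact hj
  suffices hr0 : j % a = 0 by exact Nat.dvd_of_mod_eq_zero hr0
  by_contra hr0
  have hlt : j % a < a := Nat.mod_lt j ha
  have hpow : (g : K) ^ q ^ (j % a) = (g : K) := by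
    rw [← iter_eq_pow σ hσ, hr]
  have hgu : g ^ q ^ (j % a) = g := Units.ext (by push_cast; exact hpow)
  have h1 : g ^ (q ^ (j % a) - 1) = 1 := by
    have hq1 : 1 ≤ q ^ (j % a) := Nat.one_le_pow _ _ (by omega)
    have : g ^ (q ^ (j % a) - 1) * g = g := by
      rw [← pow_succ, Nat.sub_add_cancel hq1, hgu]
    calc g ^ (q ^ (j % a) - 1) = g ^ (q ^ (j % a) - 1) * g * g⁻¹ := by group
    _ = g * g⁻¹ := by rw [this]
    _ = 1 := mul_inv_cancel g
  have hdvd : q ^ a - 1 ∣ q ^ (j % a) - 1 := horder ▸ orderOf_dvd_of_pow_eq_one h1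
  have hlt2 : q ^ (j % a) < q ^ a := Nat.pow_lt_pow_right hq hlt
  have hpos : 0 < q ^ (j % a) - 1 := by
    have : 2 ≤ q ^ (j % a) := le_trans hq (Nat.le_self_pow hr0 q)
    omega
  have := Nat.le_of_dvd hpos hdvd
  have h2 : 2 ≤ q ^ a := le_trans hq (Nat.le_self_pow (by omega) q)
  omega

end SkewAux

set_option maxHeartbeats 4000000 in
theorem stmt10 {K : Type*} [Field K] [Fintype K]
    (q a : ℕ) (hq : IsPrimePow q) (hK : Fintype.card K = q ^ a)
    (σ : K →+* K) (hσ : ∀ x : K, σ x = x ^ q)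
    (s : SkewPolyRing σ) (hs : s ≠ 0) :
    TotalDvd σ s s ↔
      ∃ (γ : K) (k : ℕ) (c : SkewPolyRing σ),
        c ∈ Set.center (SkewPolyRing σ) ∧ MonicS σ c ∧
          s = Cel σ γ * c * Xel σ ^ k := by
  classical
  have hq2 : 2 ≤ q := hq.two_le
  have ha : 0 < a := by
    by_contra h
    have ha0 : a = 0 := by omega
    rw [ha0, pow_zero] at hK
    have := Fintype.one_lt_card (α := K)
    omega
  have hsurj : Function.Surjective σ :=
    Finite.surjective_of_injective σ.injective
  constructor
  · intro htd
    set n := natDegS σ s with hn_def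
    have hn : coeffS σ s n ≠ 0 := SkewAux.coeffS_natDegS_ne_zero σ hs
    by_cases ha1 : a = 1
    · -- a = 1 : σ = id, everything central
      have hid : ∀ x : K, σ x = x := by
        intro x
        have h := SkewAux.iter_card σ hK hσ x
        rw [ha1, Function.iterate_one] at h
        exact h
      refine ⟨coeffS σ s n, 0, Cel σ (coeffS σ s n)⁻¹ * s, ?_, ?_, ?_⟩
      · apply SkewAux.mem_center_of_coeff σ
        · intro j; exact hid _
        · intro j _ x
          exact Function.iterate_fixed (hid x) j
      · have hdeg : natDegS σ (Cel σ (coeffS σ s n)⁻¹ * s) = n := by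
          apply SkewAux.natDegS_eq_of σ
          · rw [SkewAux.coeffS_Cel_mul, inv_mul_cancel₀ hn]
            exact one_ne_zero
          · intro j hj
            rw [SkewAux.coeffS_Cel_mul, SkewAux.coeffS_eq_zero_of_natDegS_lt σ hj, mul_zero]
        rw [MonicS, hdeg, SkewAux.coeffS_Cel_mul, inv_mul_cancel₀ hn]
      · rw [pow_zero, mul_one, ← mul_assoc, SkewAux.Cel_mul,
          mul_inv_cancel₀ hn, SkewAux.Cel_one, one_mul]
    · -- a ≥ 2
      have ha2 : 2 ≤ a := by omega
      obtain ⟨α, hα⟩ := SkewAux.prim_elt σ hq2 ha hK hσ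
      have hα0 : α ≠ 0 := by
        intro h0
        have : σ^[1] α = α := by rw [h0, Function.iterate_one, map_zero]
        exact ha1 (Nat.dvd_one.mp (hα 1 this))
      -- Claim A : nonzero coefficient indices are congruent mod a
      have hA : ∀ i j, coeffS σ s i ≠ 0 → coeffS σ s j ≠ 0 → i ≤ j → a ∣ (j - i) := by
        obtain ⟨v, hv⟩ := (htd (Cel σ α)).1
        have hv0 : v ≠ 0 := by
          rintro rfl
          rw [mul_zero] at hv
          have hcc : coeffS σ (Cel σ α * s) n = 0 := by rw [hv, SkewAux.coeffS_zero]
          rw [SkewAux.coeffS_Cel_mul] at hcc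
          exact mul_ne_zero hα0 hn hcc
        have hdeg1 : natDegS σ (Cel σ α * s) = n := by
          apply SkewAux.natDegS_eq_of σ
          · rw [SkewAux.coeffS_Cel_mul]; exact mul_ne_zero hα0 hn
          · intro j hj
            rw [SkewAux.coeffS_Cel_mul, SkewAux.coeffS_eq_zero_of_natDegS_lt σ hj, mul_zero]
        have hvdeg : natDegS σ v = 0 := by
          have := SkewAux.natDegS_mul σ hs hv0
          rw [← hv, hdeg1] at this
          omega
        have key : ∀ m, coeffS σ s m ≠ 0 → σ^[m] (coeffS σ v 0) = α := by
          intro m hm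
          have h : coeffS σ (Cel σ α * s) m = coeffS σ (s * v) m := by rw [hv]
          rw [SkewAux.coeffS_Cel_mul, SkewAux.coeffS_mul] at h
          rw [Finset.sum_eq_single m] at h
          · rw [Nat.sub_self] at h
            exact mul_left_cancel₀ hm (by rw [← h, mul_comm])
          · intro b hb hbne
            simp only [Finset.mem_range] at hb
            rw [SkewAux.coeffS_eq_zero_of_natDegS_lt σ (show natDegS σ v < m - b by omega),
              iterate_map_zero, mul_zero]
          · intro hmem
            exact absurd (Finset.mem_range.2 (by omega)) hmem
        intro i j hi hj hij
        apply hα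
        have e : j - i + i = j := by omega
        calc σ^[j - i] α = σ^[j - i] (σ^[i] (coeffS σ v 0)) := by rw [key i hi]
          _ = σ^[j] (coeffS σ v 0) := by rw [← Function.iterate_add_apply, e]
          _ = α := key j hj
      -- the valuation k
      have hne : {i | coeffS σ s i ≠ 0}.Nonempty := ⟨n, hn⟩
      set k := sInf {i | coeffS σ s i ≠ 0} with hk_def
      have hk : coeffS σ s k ≠ 0 := Nat.sInf_mem hne
      have hkmin : ∀ i, coeffS σ s i ≠ 0 → k ≤ i := fun i hi => Nat.sInf_le hi
      have hkn : k ≤ n := hkmin n hn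
      -- Claim B : ratio of coefficients is σ-fixed
      have hB : ∀ i, coeffS σ s i ≠ 0 →
          σ (coeffS σ s i) * coeffS σ s n = coeffS σ s i * σ (coeffS σ s n) := by
        obtain ⟨v, hv⟩ := (htd (Xel σ)).1
        have hXs : ∀ j, coeffS σ (Xel σ * s) j =
            if j = 0 then 0 else σ (coeffS σ s (j - 1)) := SkewAux.coeffS_Xel_mul σ s
        have hv0 : v ≠ 0 := by
          rintro rfl
          rw [mul_zero] at hv
          have hcc : coeffS σ (Xel σ * s) (n + 1) = 0 := by rw [hv, SkewAux.coeffS_zero]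
          rw [hXs, if_neg (by omega)] at hcc
          simp only [Nat.add_sub_cancel] at hcc
          exact hn (σ.injective (by rw [hcc, map_zero]))
        have hdeg1 : natDegS σ (Xel σ * s) = n + 1 := by
          apply SkewAux.natDegS_eq_of σ
          · rw [hXs, if_neg (by omega)]
            simp only [Nat.add_sub_cancel]
            intro h
            exact hn (σ.injective (by rw [h, map_zero]))
          · intro j hj
            rw [hXs, if_neg (by omega),
              SkewAux.coeffS_eq_zero_of_natDegS_lt σ (show n < j - 1 by omega), map_zero]
        have hvdeg : natDegS σ v = 1 := by
          have := SkewAux.natDegS_mul σ hs hv0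
          rw [← hv, hdeg1] at this
          omega
        have keyB : ∀ i, coeffS σ s i ≠ 0 →
            σ (coeffS σ s i) = coeffS σ s i * σ^[i] (coeffS σ v 1) := by
          intro i hi
          have hsucc : coeffS σ s (i + 1) = 0 := by
            by_contra hcon
            have hdvd := hA i (i + 1) hi hcon (by omega)
            simp only [Nat.add_sub_cancel_left] at hdvd
            have := Nat.le_of_dvd (by omega) hdvd
            omega
          have h : coeffS σ (Xel σ * s) (i + 1) = coeffS σ (s * v) (i + 1) := by rw [hv]
          rw [hXs, if_neg (by omega), SkewAux.coeffS_mul] at h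
          simp only [Nat.add_sub_cancel] at h
          rw [Finset.sum_eq_single i] at h
          · rw [show i + 1 - i = 1 by omega] at h
            exact h
          · intro b hb hbne
            simp only [Finset.mem_range] at hb
            by_cases hbi : b = i + 1
            · rw [hbi, hsucc, zero_mul]
            · rw [SkewAux.coeffS_eq_zero_of_natDegS_lt σ
                (show natDegS σ v < i + 1 - b by omega), iterate_map_zero, mul_zero]
          · intro hmem
            exact absurd (Finset.mem_range.2 (by omega)) hmem
        have hfix : ∀ i, coeffS σ s i ≠ 0 →
            σ^[i] (coeffS σ v 1) = σ^[n] (coeffS σ v 1) := by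
          intro i hi
          rcases le_total i n with h | h
          · have hd := hA i n hi hn h
            have e : n = (n - i) + i := by omega
            rw [show σ^[n] (coeffS σ v 1) = σ^[(n - i) + i] (coeffS σ v 1) by rw [← e],
              Function.iterate_add_apply, SkewAux.iter_fix_of_dvd σ hK hσ hd]
          · have hd := hA n i hn hi h
            have e : i = (i - n) + n := by omega
            rw [show σ^[i] (coeffS σ v 1) = σ^[(i - n) + n] (coeffS σ v 1) by rw [← e],
              Function.iterate_add_apply, SkewAux.iter_fix_of_dvd σ hK hσ hd]
        intro i hi
        rw [keyB i hi, keyB n hn, hfix i hi]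
        ring
      -- construction
      obtain ⟨c, hc⟩ : ∃ c : SkewPolyRing σ, ∀ j,
          coeffS σ c j = (coeffS σ s n)⁻¹ * coeffS σ s (j + k) := by
        refine ⟨SkewAux.ofC σ (fun j => (coeffS σ s n)⁻¹ * coeffS σ s (j + k)) (n + 1),
          fun j => ?_⟩
        rw [SkewAux.coeffS_ofC]
        by_cases h : j < n + 1
        · rw [if_pos h]
        · rw [if_neg h,
            SkewAux.coeffS_eq_zero_of_natDegS_lt σ (show natDegS σ s < j + k by omega),
            mul_zero]
      refine ⟨coeffS σ s n, k, c, ?_, ?_, ?_⟩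
      · apply SkewAux.mem_center_of_coeff σ
        · intro j
          rw [hc]
          by_cases hz : coeffS σ s (j + k) = 0
          · rw [hz, mul_zero, map_zero]
          · have hσn : σ (coeffS σ s n) ≠ 0 :=
              fun h => hn (σ.injective (by rw [h, map_zero]))
            rw [map_mul, map_inv₀, inv_mul_eq_div, inv_mul_eq_div,
              div_eq_div_iff hσn hn]
            exact hB (j + k) hz
        · intro j hj x
          rw [hc] at hj
          have hz : coeffS σ s (j + k) ≠ 0 := by
            intro h; exact hj (by rw [h, mul_zero])
          have hd := hA k (j + k) hk hz (by omega)
          rw [show j + k - k = j by omega] at hd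
          exact SkewAux.iter_fix_of_dvd σ hK hσ hd x
      · have hdegc : natDegS σ c = n - k := by
          apply SkewAux.natDegS_eq_of σ
          · rw [hc, show n - k + k = n by omega]
            exact mul_ne_zero (inv_ne_zero hn) hn
          · intro j hj
            rw [hc, SkewAux.coeffS_eq_zero_of_natDegS_lt σ (show natDegS σ s < j + k by omega),
              mul_zero]
        rw [MonicS, hdegc, hc, show n - k + k = n by omega, inv_mul_cancel₀ hn]
      · apply SkewAux.ext_coeff σ
        intro j
        rw [SkewAux.coeffS_mul_Xel_pow, SkewAux.coeffS_Cel_mul, hc]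
        by_cases h : j < k
        · rw [if_pos h]
          by_contra hcon
          exact absurd (hkmin j hcon) (by omega)
        · rw [if_neg h, show j - k + k = j by omega, mul_inv_cancel_left₀ hn]
  · rintro ⟨γ, k, c, hcen, hmon, rfl⟩
    have hcomm : ∀ g : SkewPolyRing σ, g * c = c * g :=
      fun g => Semigroup.mem_center_iff.mp hcen g
    have hγ : γ ≠ 0 := by
      rintro rfl
      apply hs
      apply SkewAux.ext_coeff σ
      intro j
      rw [SkewAux.coeffS_mul_Xel_pow, SkewAux.coeffS_zero]
      split_ifs with h
      · rfl
      · rw [SkewAux.coeffS_Cel_mul, zero_mul]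
    have h1 : Cel σ γ * Cel σ γ⁻¹ = 1 := by
      rw [SkewAux.Cel_mul, mul_inv_cancel₀ hγ, SkewAux.Cel_one]
    have h2 : Cel σ γ⁻¹ * Cel σ γ = 1 := by
      rw [SkewAux.Cel_mul, inv_mul_cancel₀ hγ, SkewAux.Cel_one]
    intro u
    constructor
    · obtain ⟨w, hw⟩ := SkewAux.mul_Xel_pow_comm σ hsurj k (Cel σ γ⁻¹ * u * Cel σ γ)
      refine ⟨w, ?_⟩
      have key : u * Cel σ γ = Cel σ γ * (Cel σ γ⁻¹ * u * Cel σ γ) := by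
        rw [← mul_assoc, ← mul_assoc, h1, one_mul]
      calc u * (Cel σ γ * c * Xel σ ^ k)
          = u * Cel σ γ * c * Xel σ ^ k := by rw [← mul_assoc, ← mul_assoc]
        _ = Cel σ γ * (Cel σ γ⁻¹ * u * Cel σ γ) * c * Xel σ ^ k := by rw [key]
        _ = Cel σ γ * ((Cel σ γ⁻¹ * u * Cel σ γ) * c) * Xel σ ^ k := by
            rw [mul_assoc (Cel σ γ)]
        _ = Cel σ γ * (c * (Cel σ γ⁻¹ * u * Cel σ γ)) * Xel σ ^ k := by
            rw [hcomm]
        _ = Cel σ γ * c * ((Cel σ γ⁻¹ * u * Cel σ γ) * Xel σ ^ k) := by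
            simp only [← mul_assoc]
        _ = Cel σ γ * c * (Xel σ ^ k * w) := by rw [hw]
        _ = Cel σ γ * c * Xel σ ^ k * w := by rw [← mul_assoc]
    · obtain ⟨w, hw⟩ := SkewAux.Xel_pow_mul_comm σ k u
      refine ⟨Cel σ γ * w * Cel σ γ⁻¹, ?_⟩
      calc Cel σ γ * c * Xel σ ^ k * u
          = Cel σ γ * c * (Xel σ ^ k * u) := by rw [mul_assoc]
        _ = Cel σ γ * c * (w * Xel σ ^ k) := by rw [hw]
        _ = Cel σ γ * (c * w) * Xel σ ^ k := by rw [← mul_assoc, ← mul_assoc, mul_assoc (Cel σ γ)]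
        _ = Cel σ γ * (w * c) * Xel σ ^ k := by rw [hcomm]
        _ = Cel σ γ * w * Cel σ γ⁻¹ * (Cel σ γ * c * Xel σ ^ k) := by
            simp only [← mul_assoc]
            rw [mul_assoc (Cel σ γ * w) (Cel σ γ⁻¹) (Cel σ γ), h2, mul_one]


end
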